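/- Let τ(p) = 2(1−2p)/((1−2p)(W+1) + pW(1−(2p)^m)) for p ∈ (0, 1/2), with W ≥ 1, m ≥ 1. Then τ(p) is continuous and strictly decreasing on (0, 1/2), hence injective. -/
import Mathlib

private lemma bianchi_denom_factor (W : ℝ) (m : ℕ) (p : ℝ) :
    (1 - 2 * p) * (W + 1) + p * W * (1 - (2 * p) ^ m)
      = (1 - 2 * p) * ((W + 1) + p * W * ∑ k ∈ Finset.range m, (2 * p) ^ k) := by
  have h := geom_sum_mul (2 * p) m
  linear_combination (p * W) * h

/-- The Bianchi access probability τ(p) = 2(1−2p)/((1−2p)(W+1) + pW(1−(2p)^m))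
is continuous and strictly decreasing on (0, 1/2), hence injective there. -/
theorem bianchi_tau_strictAnti (W : ℝ) (m : ℕ) (hW : 1 ≤ W) (hm : 1 ≤ m) :
    ContinuousOn
      (fun p : ℝ => 2 * (1 - 2 * p) / ((1 - 2 * p) * (W + 1) + p * W * (1 - (2 * p) ^ m)))
      (Set.Ioo (0:ℝ) (1/2)) ∧
    StrictAntiOn
      (fun p : ℝ => 2 * (1 - 2 * p) / ((1 - 2 * p) * (W + 1) + p * W * (1 - (2 * p) ^ m)))
      (Set.Ioo (0:ℝ) (1/2)) ∧
    Set.InjOn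
      (fun p : ℝ => 2 * (1 - 2 * p) / ((1 - 2 * p) * (W + 1) + p * W * (1 - (2 * p) ^ m)))
      (Set.Ioo (0:ℝ) (1/2)) := by
  set g : ℝ → ℝ := fun p => (W + 1) + p * W * ∑ k ∈ Finset.range m, (2 * p) ^ k with hg
  have hgpos : ∀ p ∈ Set.Ioo (0:ℝ) (1/2), 0 < g p := by
    intro p hp
    have hp0 : 0 < p := hp.1
    have hsum : 0 ≤ ∑ k ∈ Finset.range m, (2 * p) ^ k :=
      Finset.sum_nonneg fun k _ => pow_nonneg (by linarith) k
    have hW0 : (0:ℝ) < W := by linarith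
    have : 0 ≤ p * W * ∑ k ∈ Finset.range m, (2 * p) ^ k := by positivity
    simp only [hg]; linarith
  have hdenom : ∀ p ∈ Set.Ioo (0:ℝ) (1/2),
      (1 - 2 * p) * (W + 1) + p * W * (1 - (2 * p) ^ m) = (1 - 2 * p) * g p := by
    intro p hp; exact bianchi_denom_factor W m p
  have hdpos : ∀ p ∈ Set.Ioo (0:ℝ) (1/2),
      0 < (1 - 2 * p) * (W + 1) + p * W * (1 - (2 * p) ^ m) := by
    intro p hp
    rw [hdenom p hp]
    have : 0 < 1 - 2 * p := by have := hp.2; linarith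
    exact mul_pos this (hgpos p hp)
  have hval : ∀ p ∈ Set.Ioo (0:ℝ) (1/2),
      2 * (1 - 2 * p) / ((1 - 2 * p) * (W + 1) + p * W * (1 - (2 * p) ^ m)) = 2 / g p := by
    intro p hp
    rw [hdenom p hp]
    have h1 : (1 - 2 * p) ≠ 0 := by have := hp.2; intro h; nlinarith [hp.2]
    rw [mul_comm 2 (1 - 2 * p), mul_div_mul_left _ _ h1]
  have hanti : StrictAntiOn
      (fun p : ℝ => 2 * (1 - 2 * p) / ((1 - 2 * p) * (W + 1) + p * W * (1 - (2 * p) ^ m)))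
      (Set.Ioo (0:ℝ) (1/2)) := by
    intro x hx y hy hxy
    simp only
    rw [hval x hx, hval y hy]
    apply div_lt_div_of_pos_left (by norm_num) (hgpos x hx)
    -- g x < g y
    have hx0 := hx.1
    have hsx : 0 < ∑ k ∈ Finset.range m, (2 * x) ^ k := by
      apply Finset.sum_pos (fun k _ => pow_pos (by linarith) k)
      exact Finset.nonempty_range_iff.mpr (by omega)
    have hsle : ∑ k ∈ Finset.range m, (2 * x) ^ k ≤ ∑ k ∈ Finset.range m, (2 * y) ^ k := by
      apply Finset.sum_le_sum
      intro k _
      exact pow_le_pow_left₀ (by linarith) (by linarith) k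
    have hW0 : (0:ℝ) < W := by linarith
    have : x * ∑ k ∈ Finset.range m, (2 * x) ^ k < y * ∑ k ∈ Finset.range m, (2 * y) ^ k :=
      calc x * ∑ k ∈ Finset.range m, (2 * x) ^ k
          < y * ∑ k ∈ Finset.range m, (2 * x) ^ k := mul_lt_mul_of_pos_right hxy hsx
        _ ≤ y * ∑ k ∈ Finset.range m, (2 * y) ^ k :=
            mul_le_mul_of_nonneg_left hsle (by linarith)
    simp only [hg]
    nlinarith
  refine ⟨?_, hanti, hanti.injOn⟩
  apply ContinuousOn.div
  · fun_prop
  · fun_prop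
  · intro p hp; exact ne_of_gt (hdpos p hp)
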